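/- For every n ∈ ℕ, the rational number (27·7³)^n · (2/7)_n (13/21)_n (20/21)_n / ((6/7)_n · (n!)²) = 9261^n · (2/7)_n (13/21)_n (20/21)_n / ((6/7)_n · (n!)²) is an integer. (Equivalently, the hypergeometric series ₃F₂([2/7, 13/21, 20/21], [6/7, 1], 27·7³·x) has integer Taylor coefficients.) -/

import Mathlib

open Finset Nat

private lemma poch_eval' (a b : ℕ) (hb : b ≠ 0) (n : ℕ) :
    (ascPochhammer ℚ n).eval ((a : ℚ) / b) =
      (∏ k ∈ range n, (a + b * k) : ℕ) / (b : ℚ) ^ n := by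
  have hb' : (b : ℚ) ≠ 0 := Nat.cast_ne_zero.mpr hb
  induction n with
  | zero => simp
  | succ n ih =>
    rw [ascPochhammer_succ_eval, ih, prod_range_succ]
    push_cast
    field_simp
    ring

private lemma prod_split' (n : ℕ) :
    ∏ j ∈ range (3 * n), (6 + 7 * j) =
      3 ^ n * ((∏ k ∈ range n, (2 + 7 * k)) * (∏ k ∈ range n, (13 + 21 * k)) *
        ∏ k ∈ range n, (20 + 21 * k)) := by
  induction n with
  | zero => simp
  | succ n ih =>
    have h3 : 3 * (n + 1) = 3 * n + 1 + 1 + 1 := by ring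
    rw [h3, prod_range_succ, prod_range_succ, prod_range_succ, ih,
      prod_range_succ, prod_range_succ, prod_range_succ]
    ring

private lemma exists_root' (q : ℕ) (hq : 0 < q) (hc : Nat.Coprime 7 q) :
    ∃ v, q ∣ 7 * v + 6 := by
  haveI : NeZero q := ⟨hq.ne'⟩
  refine ⟨((7 : ZMod q)⁻¹ * (-6)).val, ?_⟩
  rw [← ZMod.natCast_eq_zero_iff]
  push_cast
  rw [ZMod.natCast_zmod_val]
  have h7 : ((7 : ℕ) : ZMod q) * ((7 : ℕ) : ZMod q)⁻¹ = 1 :=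
    ZMod.coe_mul_inv_eq_one 7 hc
  push_cast at h7
  rw [← mul_assoc, h7]
  ring

private lemma count_dvd_lower' (n q v : ℕ) (hq : 0 < q) (hv : q ∣ 7 * v + 6) :
    2 * (n / q) ≤ #{j ∈ Ico n (3 * n) | q ∣ 6 + 7 * j} := by
  have hsub : {j ∈ Ico n (3 * n) | j ≡ v [MOD q]} ⊆ {j ∈ Ico n (3 * n) | q ∣ 6 + 7 * j} := by
    intro j hj
    simp only [mem_filter] at hj ⊢
    refine ⟨hj.1, ?_⟩
    have h1 : 6 + 7 * j ≡ 6 + 7 * v [MOD q] := (hj.2.mul_left 7).add_left 6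
    have hv' : q ∣ 6 + 7 * v := by rwa [add_comm] at hv
    exact (Nat.modEq_zero_iff_dvd).mp (h1.trans ((Nat.modEq_zero_iff_dvd).mpr hv'))
  refine le_trans ?_ (card_le_card hsub)
  have hcard := Nat.Ico_filter_modEq_card n (3 * n) hq v
  set t : ℕ := 2 * (n / q) with htdef
  have ht : ((t : ℕ) : ℤ) ≤
      max (⌈((3 * n : ℕ) - (v : ℚ)) / (q : ℚ)⌉ - ⌈((n : ℕ) - (v : ℚ)) / (q : ℚ)⌉) 0 := by
    refine le_max_of_le_left ?_
    have htq : ((t : ℚ)) * q ≤ 2 * n := by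
      have : t * q ≤ 2 * n := by
        calc 2 * (n / q) * q = 2 * (n / q * q) := by ring
        _ ≤ 2 * n := Nat.mul_le_mul_left 2 (Nat.div_mul_le_self n q)
      exact_mod_cast this
    have h1 : ((n : ℚ) - v) / q + ((t : ℤ) : ℚ) ≤ ((3 * n : ℕ) - (v : ℚ)) / q := by
      rw [div_add' _ _ _ (by positivity : (q : ℚ) ≠ 0)]
      apply div_le_div_of_nonneg_right ?_ (by positivity)
      push_cast
      linarith
    have hc2 : ⌈((n : ℚ) - v) / q⌉ + (t : ℤ) ≤ ⌈((3 * n : ℕ) - (v : ℚ)) / q⌉ := by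
      calc ⌈((n : ℚ) - v) / q⌉ + (t : ℤ) = ⌈((n : ℚ) - v) / q + ((t : ℤ) : ℚ)⌉ :=
            (Int.ceil_add_intCast _ _).symm
        _ ≤ _ := Int.ceil_le_ceil h1
    linarith
  rw [← hcard] at ht
  exact_mod_cast ht

private lemma card_pow_dvd_le_factorization' {m p : ℕ} (pp : p.Prime) (hm : m ≠ 0) (b : ℕ) :
    #{i ∈ Ico 1 b | p ^ i ∣ m} ≤ m.factorization p := by
  have hsub : {i ∈ Ico 1 b | p ^ i ∣ m} ⊆ Icc 1 (m.factorization p) := by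
    intro i hi
    simp only [mem_filter, mem_Ico, mem_Icc] at hi ⊢
    exact ⟨hi.1.1, (Nat.Prime.pow_dvd_iff_le_factorization pp hm).mp hi.2⟩
  simpa using card_le_card hsub

private lemma key_dvd' (n : ℕ) :
    (n !) ^ 2 ∣ 7 ^ n * ∏ j ∈ Ico n (3 * n), (6 + 7 * j) := by
  have hT : (∏ j ∈ Ico n (3 * n), (6 + 7 * j)) ≠ 0 :=
    Finset.prod_ne_zero_iff.mpr fun j _ => by positivity
  have hfac : (n !) ^ 2 ≠ 0 := by positivity
  rw [← Nat.factorization_le_iff_dvd hfac (by positivity)]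
  rw [Finsupp.le_def]
  intro p
  by_cases pp : p.Prime
  · haveI := Fact.mk pp
    have hlhs : ((n !) ^ 2).factorization p = 2 * (n !).factorization p := by
      simp [Nat.factorization_pow]
    have hrhs : (7 ^ n * ∏ j ∈ Ico n (3 * n), (6 + 7 * j)).factorization p =
        n * (7 : ℕ).factorization p +
          (∏ j ∈ Ico n (3 * n), (6 + 7 * j)).factorization p := by
      rw [Nat.factorization_mul (by positivity) hT]
      simp [Nat.factorization_pow]
    rw [hlhs, hrhs]
    by_cases hp7 : p = 7
    · subst hp7
      have hv6 : 6 * padicValNat 7 (n !) ≤ n := by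
        have h := sub_one_mul_padicValNat_factorial (p := 7) n
        norm_num at h
        omega
      have h1 : (7 : ℕ).factorization 7 = 1 := Nat.Prime.factorization_self (by norm_num)
      rw [h1, Nat.factorization_def _ (by norm_num)]
      omega
    · have h70 : (7 : ℕ).factorization p = 0 :=
        Nat.factorization_eq_zero_of_not_dvd
          (fun h => hp7 ((Nat.prime_dvd_prime_iff_eq pp (by norm_num)).mp h))
      rw [h70, mul_zero, zero_add]
      rcases Nat.eq_zero_or_pos n with hn | hn
      · simp [hn]
      set b := Nat.log p n + 1 with hb
      have hf : (n !).factorization p = ∑ i ∈ Ico 1 b, n / p ^ i := by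
        rw [Nat.factorization_def _ pp]
        exact padicValNat_factorial (Nat.lt_succ_self _)
      have hTfac : (∏ j ∈ Ico n (3 * n), (6 + 7 * j)).factorization p =
          ∑ j ∈ Ico n (3 * n), (6 + 7 * j).factorization p := by
        rw [Nat.factorization_prod (fun j _ => by positivity)]
        exact Finset.sum_apply' p
      rw [hf, hTfac, Finset.mul_sum]
      calc ∑ i ∈ Ico 1 b, 2 * (n / p ^ i)
          ≤ ∑ i ∈ Ico 1 b, #{j ∈ Ico n (3 * n) | p ^ i ∣ 6 + 7 * j} := by
            refine Finset.sum_le_sum fun i _ => ?_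
            have hq : 0 < p ^ i := pow_pos pp.pos i
            have hc : Nat.Coprime 7 (p ^ i) :=
              (Nat.Coprime.pow_right i
                (((Nat.coprime_primes (by norm_num) pp).mpr (Ne.symm hp7))))
            obtain ⟨v, hv⟩ := exists_root' (p ^ i) hq hc
            exact count_dvd_lower' n (p ^ i) v hq hv
        _ = ∑ j ∈ Ico n (3 * n), #{i ∈ Ico 1 b | p ^ i ∣ 6 + 7 * j} := by
            simp_rw [Finset.card_filter]
            exact Finset.sum_comm
        _ ≤ ∑ j ∈ Ico n (3 * n), (6 + 7 * j).factorization p :=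
            Finset.sum_le_sum fun j _ =>
              card_pow_dvd_le_factorization' pp (by positivity) b
  · rw [Nat.factorization_eq_zero_of_not_prime _ pp]
    exact Nat.zero_le _

/-- The hypergeometric series `₃F₂([2/7, 13/21, 20/21], [6/7, 1], 27·7³·x)` has
integer Taylor coefficients: for every `n`,
`9261^n (2/7)_n (13/21)_n (20/21)_n / ((6/7)_n (n!)²)` is an integer. -/
theorem hypergeom_2_7_13_21_20_21_integer_coeffs (n : ℕ) :
    ∃ m : ℤ,
      9261 ^ n * (ascPochhammer ℚ n).eval (2 / 7) * (ascPochhammer ℚ n).eval (13 / 21) *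
          (ascPochhammer ℚ n).eval (20 / 21) /
        ((ascPochhammer ℚ n).eval (6 / 7) * (Nat.factorial n : ℚ) ^ 2) = (m : ℚ) := by
  have h2 : (ascPochhammer ℚ n).eval (2 / 7) =
      ((∏ k ∈ range n, (2 + 7 * k) : ℕ) : ℚ) / (7 : ℚ) ^ n := by
    simpa using poch_eval' 2 7 (by norm_num) n
  have h13 : (ascPochhammer ℚ n).eval (13 / 21) =
      ((∏ k ∈ range n, (13 + 21 * k) : ℕ) : ℚ) / (21 : ℚ) ^ n := by
    simpa using poch_eval' 13 21 (by norm_num) n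
  have h20 : (ascPochhammer ℚ n).eval (20 / 21) =
      ((∏ k ∈ range n, (20 + 21 * k) : ℕ) : ℚ) / (21 : ℚ) ^ n := by
    simpa using poch_eval' 20 21 (by norm_num) n
  have h6 : (ascPochhammer ℚ n).eval (6 / 7) =
      ((∏ k ∈ range n, (6 + 7 * k) : ℕ) : ℚ) / (7 : ℚ) ^ n := by
    simpa using poch_eval' 6 7 (by norm_num) n
  set A := (∏ k ∈ range n, (2 + 7 * k) : ℕ) with hA
  set B := (∏ k ∈ range n, (13 + 21 * k) : ℕ) with hB
  set C := (∏ k ∈ range n, (20 + 21 * k) : ℕ) with hC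
  set D := (∏ k ∈ range n, (6 + 7 * k) : ℕ) with hD
  set T := (∏ j ∈ Ico n (3 * n), (6 + 7 * j) : ℕ) with hT
  have hsplit : D * T = 3 ^ n * (A * B * C) := by
    rw [hD, hT, Finset.prod_range_mul_prod_Ico _ (show n ≤ 3 * n by omega)]
    exact prod_split' n
  have hdvd : (n !) ^ 2 ∣ 7 ^ n * T := key_dvd' n
  refine ⟨((7 ^ n * T) / (n ! ^ 2) : ℕ), ?_⟩
  have hcast : (((7 ^ n * T) / (n ! ^ 2) : ℕ) : ℚ) = (7 : ℚ) ^ n * T / ((n !) : ℚ) ^ 2 := by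
    rw [Nat.cast_div hdvd (by positivity)]
    push_cast
    ring
  rw [h2, h13, h20, h6, Int.cast_natCast, hcast]
  have hsplitQ : (D : ℚ) * T = 3 ^ n * (A * B * C) := by exact_mod_cast hsplit
  have hD0 : (D : ℚ) ≠ 0 := by
    rw [hD]
    push_cast
    exact Finset.prod_ne_zero_iff.mpr fun k _ => by positivity
  have hf0 : ((n !) : ℚ) ≠ 0 := by positivity
  have h9261 : (9261 : ℚ) ^ n = 3^n*3^n*3^n*7^n*7^n*7^n := by
    have h : (9261 : ℚ) = 3*3*3*7*7*7 := by norm_num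
    rw [h, mul_pow, mul_pow, mul_pow, mul_pow, mul_pow]
  have h21 : (21 : ℚ) ^ n = 3^n*7^n := by
    have h : (21 : ℚ) = 3*7 := by norm_num
    rw [h, mul_pow]
  rw [h9261, h21]
  field_simp
  linear_combination (-1 : ℚ) * hsplitQ
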